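/- Let A be an N×m real matrix, H an orthogonal projection on ℝ^N, and suppose Aᵀ(I−H)A is invertible. If s ∈ ℝ^m satisfies diag(s) ⪯ 2Aᵀ(I−H)A (Loewner order) and 0 ≤ sⱼ, then the matrix 2·diag(s) − diag(s)(Aᵀ(I−H)A)⁻¹diag(s) is positive semidefinite, hence admits a factorization CᵀC for some m×m matrix C. -/

import Mathlib

open Matrix

private lemma realCT {a b : Type*} (M : Matrix a b ℝ) : Mᴴ = Mᵀ := by
  ext i j; simp [conjTranspose_apply]

private lemma psd_smul {n : Type*} [Fintype n] {M : Matrix n n ℝ} (hM : M.PosSemidef)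
    {c : ℝ} (hc : 0 ≤ c) : (c • M).PosSemidef := by
  refine posSemidef_iff_dotProduct_mulVec.mpr ⟨?_, fun x => ?_⟩
  · show _ᴴ = _
    rw [conjTranspose_smul, hM.1.eq]
    simp
  · have := hM.dotProduct_mulVec_nonneg x
    simp only [smul_mulVec, dotProduct_smul, smul_eq_mul]
    exact mul_nonneg hc this

private lemma psd_add {n : Type*} [Fintype n] {M P : Matrix n n ℝ} (hM : M.PosSemidef)
    (hP : P.PosSemidef) : (M + P).PosSemidef := by
  refine posSemidef_iff_dotProduct_mulVec.mpr ⟨hM.1.add hP.1, fun x => ?_⟩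
  rw [add_mulVec, dotProduct_add]
  exact add_nonneg (hM.dotProduct_mulVec_nonneg x) (hP.dotProduct_mulVec_nonneg x)

private lemma psd_fromBlocks_zero {n : Type*} [Fintype n] {M : Matrix n n ℝ}
    (hM : M.PosSemidef) : (fromBlocks M 0 0 (0 : Matrix n n ℝ)).PosSemidef := by
  have hMt : Mᵀ = M := by rw [← realCT, hM.1.eq]
  refine posSemidef_iff_dotProduct_mulVec.mpr ⟨?_, fun x => ?_⟩
  · show _ᴴ = _
    rw [realCT, fromBlocks_transpose, hMt]
    simp
  · rw [fromBlocks_mulVec]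
    have : star x ⬝ᵥ Sum.elim (M *ᵥ (x ∘ Sum.inl) + 0 *ᵥ (x ∘ Sum.inr))
        (0 *ᵥ (x ∘ Sum.inl) + 0 *ᵥ (x ∘ Sum.inr))
        = star (x ∘ Sum.inl) ⬝ᵥ (M *ᵥ (x ∘ Sum.inl)) := by
      simp [dotProduct, Fintype.sum_sum_type]
    rw [this]
    exact hM.dotProduct_mulVec_nonneg _

/-- If `diag(s) ⪯ 2Aᵀ(I−H)A` (Loewner order), `s ≥ 0`, and `Aᵀ(I−H)A` is invertible,
then `2 diag(s) − diag(s)(Aᵀ(I−H)A)⁻¹ diag(s)` is positive semidefinite, hence admits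
a factorization `CᵀC`. -/
theorem knockoff_C_exists
    {N m : Type*} [Fintype N] [DecidableEq N] [Fintype m] [DecidableEq m]
    (H : Matrix N N ℝ) (hHsym : Hᵀ = H) (hHidem : H * H = H)
    (A : Matrix N m ℝ) (s : m → ℝ)
    (hGinv : IsUnit (Aᵀ * (1 - H) * A))
    (hs : ∀ j, 0 ≤ s j)
    (hLoewner : (2 • (Aᵀ * (1 - H) * A) - Matrix.diagonal s).PosSemidef) :
    (2 • Matrix.diagonal s
      - Matrix.diagonal s * (Aᵀ * (1 - H) * A)⁻¹ * Matrix.diagonal s).PosSemidef ∧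
    ∃ C : Matrix m m ℝ,
      Cᵀ * C = 2 • Matrix.diagonal s
        - Matrix.diagonal s * (Aᵀ * (1 - H) * A)⁻¹ * Matrix.diagonal s := by
  set G := Aᵀ * (1 - H) * A with hGdef
  set D := Matrix.diagonal s with hDdef
  have hDH : Dᴴ = D := by
    rw [hDdef, diagonal_conjTranspose]
    simp
  -- G is positive semidefinite
  have hproj : (1 - H)ᵀ * (1 - H) = 1 - H := by
    rw [transpose_sub, transpose_one, hHsym]
    rw [sub_mul, one_mul, mul_sub, mul_one, hHidem]
    abel
  have hGfact : G = (((1 - H) * A))ᴴ * ((1 - H) * A) := by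
    rw [realCT, transpose_mul, hGdef, Matrix.mul_assoc, Matrix.mul_assoc,
      ← Matrix.mul_assoc ((1 - H)ᵀ), hproj]
  have hGpsd : G.PosSemidef := hGfact ▸ posSemidef_conjTranspose_mul_self _
  -- G is positive definite
  have hGdet : IsUnit G.det := (Matrix.isUnit_iff_isUnit_det G).mp hGinv
  have hGpd : G.PosDef := by
    refine posDef_iff_dotProduct_mulVec.mpr ⟨hGpsd.1, fun x hx => ?_⟩
    rcases (hGpsd.dotProduct_mulVec_nonneg x).lt_or_eq with h | h
    · exact h
    · exfalso
      have h0 : G *ᵥ x = 0 := (hGpsd.dotProduct_mulVec_zero_iff x).mp h.symm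
      have : x = 0 := by
        have := congrArg (fun v => G⁻¹ *ᵥ v) h0
        simpa [mulVec_mulVec, Matrix.nonsing_inv_mul G hGdet] using this
      exact hx this
  have : Invertible G := G.invertibleOfIsUnitDet hGdet
  -- D is positive semidefinite
  have hDpsd : D.PosSemidef := by
    rw [hDdef]
    exact posSemidef_diagonal_iff.mpr (fun i => by simpa using hs i)
  -- key block matrix is PSD
  have hP : (fromBlocks (2 • G - D) 0 0 (0 : Matrix m m ℝ)).PosSemidef :=
    psd_fromBlocks_zero hLoewner
  have hL : (fromBlocks (1 : Matrix m m ℝ) ((2:ℝ) • 1) 0 0)ᴴ *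
      fromBlocks D 0 0 (0 : Matrix m m ℝ) *
      fromBlocks (1 : Matrix m m ℝ) ((2:ℝ) • 1) 0 0
      = fromBlocks D ((2:ℝ) • D) ((2:ℝ) • D) ((4:ℝ) • D) := by
    rw [fromBlocks_conjTranspose, fromBlocks_multiply, fromBlocks_multiply]
    ext (i | i) (j | j)
    all_goals simp [fromBlocks, realCT, smul_mul_assoc, mul_smul_comm, smul_smul]
    all_goals norm_num
  have hX : (fromBlocks D ((2:ℝ) • D) ((2:ℝ) • D) ((4:ℝ) • D)).PosSemidef := by
    rw [← hL]
    exact (psd_fromBlocks_zero hDpsd).conjTranspose_mul_mul_same _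
  have htwo : fromBlocks (2 • G - D) 0 0 (0 : Matrix m m ℝ)
      + fromBlocks D ((2:ℝ) • D) ((2:ℝ) • D) ((4:ℝ) • D)
      = (2:ℝ) • fromBlocks G D D (2 • D) := by
    ext (i | i) (j | j) <;> simp [fromBlocks, two_smul] <;> ring
  have h2 : ((2:ℝ) • fromBlocks G D D (2 • D)).PosSemidef :=
    htwo ▸ psd_add hP hX
  have hBlock : (fromBlocks G D D (2 • D)).PosSemidef := by
    have heq : fromBlocks G D D (2 • D)
        = (1/2 : ℝ) • ((2:ℝ) • fromBlocks G D D (2 • D)) := by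
      rw [smul_smul]; norm_num
    rw [heq]
    exact psd_smul h2 (by norm_num)
  have hres : (2 • D - Dᴴ * G⁻¹ * D).PosSemidef :=
    (PosDef.fromBlocks₁₁ D (2 • D) hGpd).mp (by rw [hDH]; exact hBlock)
  rw [hDH] at hres
  refine ⟨hres, ?_⟩
  open scoped MatrixOrder in
  obtain ⟨B, hB⟩ := CStarAlgebra.nonneg_iff_eq_star_mul_self.mp hres.nonneg
  exact ⟨B, by rw [hB, star_eq_conjTranspose, realCT B]⟩
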